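/- Every computably enumerable set A ⊆ ℕ has, for any real ε > 0, a computable subset B ⊆ A with lower density strictly greater than the lower density of A minus ε. -/

import Mathlib

open Filter

noncomputable def pdens (S : Set ℕ) (n : ℕ) : ℝ := (S ∩ Set.Iio n).ncard / n

noncomputable def lowerDensity (S : Set ℕ) : ℝ := liminf (pdens S) atTop

noncomputable def upperDensity (S : Set ℕ) : ℝ := limsup (pdens S) atTop

open Nat.Partrec (Code)
open Nat.Partrec.Code

def eAux (c : Code) (x s : ℕ) : Bool := (evaln s c x).isSome

def cntAux (c : Code) (s m : ℕ) : ℕ :=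
  ((List.range m).filterMap fun x => bif eAux c x s then some x else none).length

def PAux (c : Code) (N a b k s : ℕ) : Bool :=
  ((List.range (k * k + 1)).filterMap fun m =>
    bif decide (m < N) || decide (a * m < b * cntAux c s m) then none else some m).length == 0

theorem eAux_mono (c : Code) {x s s' : ℕ} (h : s ≤ s') (hx : eAux c x s = true) :
    eAux c x s' = true := by
  simp only [eAux, Option.isSome_iff_exists] at hx ⊢
  obtain ⟨y, hy⟩ := hx
  exact ⟨y, evaln_mono h hy⟩

theorem cntAux_eq_card (c : Code) (s m : ℕ) :
    cntAux c s m = ((Finset.range m).filter fun x => eAux c x s = true).card := by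
  have h : ∀ l : List ℕ, (l.filterMap fun x => bif eAux c x s then some x else none) =
      l.filter fun x => eAux c x s := by
    intro l; induction l with
    | nil => rfl
    | cons a l ih =>
      simp only [List.filterMap_cons, List.filter_cons]
      cases ha : eAux c a s <;> simp [ha, ih]
  rw [cntAux, h, Finset.card, Finset.filter_val, Finset.range_val, ← Multiset.coe_range,
    Multiset.filter_coe, Multiset.coe_card]
  simp

theorem PAux_iff (c : Code) (N a b k s : ℕ) :
    PAux c N a b k s = true ↔ ∀ m ≤ k * k, m < N ∨ a * m < b * cntAux c s m := by
  rw [PAux, beq_iff_eq, List.length_eq_zero_iff, List.filterMap_eq_nil_iff]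
  constructor
  · intro h m hm
    have := h m (by simpa [Nat.lt_succ_iff] using hm)
    rcases hd : (decide (m < N) || decide (a * m < b * cntAux c s m)) with _ | _
    · rw [hd] at this; simp at this
    · simpa using hd
  · intro h m hm
    have := h m (by simpa [Nat.lt_succ_iff] using hm)
    have hd : (decide (m < N) || decide (a * m < b * cntAux c s m)) = true := by
      simpa using this
    rw [hd]; rfl

theorem eAux_prim (c : Code) : Primrec₂ (eAux c) :=
  Primrec₂.of_eq
    ((Primrec.option_isSome.comp
      (primrec_evaln.comp (((Primrec.snd).pair (Primrec.const c)).pair Primrec.fst))).to₂)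
    (fun _ _ => rfl)

theorem cntAux_prim (c : Code) : Primrec₂ (cntAux c) := by
  have hinner : Primrec₂ fun (s x : ℕ) => bif eAux c x s then some x else none :=
    Primrec₂.of_eq
      ((Primrec.cond ((eAux_prim c).comp Primrec.snd Primrec.fst)
        (Primrec.option_some.comp Primrec.snd) (Primrec.const none)).to₂)
      (fun _ _ => rfl)
  exact Primrec₂.of_eq
    ((Primrec.list_length.comp
      (Primrec.listFilterMap (Primrec.list_range.comp Primrec.snd)
        ((hinner.comp (Primrec.fst.comp Primrec.fst) Primrec.snd)).to₂
        )).to₂)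
    (fun _ _ => rfl)

theorem PAux_prim (c : Code) (N a b : ℕ) : Primrec₂ (PAux c N a b) := by
  have hcond : Primrec₂ fun (s m : ℕ) =>
      (decide (m < N) || decide (a * m < b * cntAux c s m) : Bool) := by
    apply Primrec₂.of_eq (g := fun s m => _) ?_ (fun _ _ => rfl)
    exact ((Primrec.dom_bool₂ Bool.or).comp
        (Primrec.ite (Primrec.nat_lt.comp Primrec.snd (Primrec.const N))
          (Primrec.const true) (Primrec.const false))
        (Primrec.ite (Primrec.nat_lt.comp
            ((Primrec.nat_mul.comp (Primrec.const a) Primrec.snd))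
            ((Primrec.nat_mul.comp (Primrec.const b)
              ((cntAux_prim c).comp Primrec.fst Primrec.snd))))
          (Primrec.const true) (Primrec.const false))).to₂
  have hinner : Primrec₂ fun (p : ℕ × ℕ) (m : ℕ) =>
      bif decide (m < N) || decide (a * m < b * cntAux c p.2 m) then none else some m := by
    apply Primrec₂.of_eq (g := fun p m => _) ?_ (fun _ _ => rfl)
    exact (Primrec.cond (hcond.comp (Primrec.snd.comp Primrec.fst) Primrec.snd)
      (Primrec.const none) (Primrec.option_some.comp Primrec.snd)).to₂
  apply Primrec₂.of_eq (g := fun k s => _) ?_ (fun _ _ => rfl)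
  exact (Primrec.beq.comp
    (Primrec.list_length.comp
      (Primrec.listFilterMap
        (Primrec.list_range.comp
          (Primrec.nat_add.comp (Primrec.nat_mul.comp Primrec.fst Primrec.fst)
            (Primrec.const 1)))
        hinner))
    (Primrec.const 0)).to₂

def gAux (c : Code) (N a b : ℕ) (h : ∀ k, ∃ s, PAux c N a b k s = true) (k : ℕ) : ℕ :=
  Nat.find (h k)

theorem gAux_computable (c : Code) (N a b : ℕ) (h : ∀ k, ∃ s, PAux c N a b k s = true) :
    Computable (gAux c N a b h) := by
  have hp : Partrec fun k => Nat.rfind fun s => (Part.some (PAux c N a b k s) : Part Bool) :=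
    Partrec.rfind ((PAux_prim c N a b).to_comp.partrec₂)
  exact hp.of_eq fun k => by
    apply Part.eq_some_iff.2
    apply Nat.mem_rfind.2
    constructor
    · simpa [gAux] using Nat.find_spec (h k)
    · intro m hm
      simpa using Nat.find_min (h k) hm

theorem ncard_setOf_bool (p : ℕ → Bool) (m : ℕ) :
    ({x | p x = true} ∩ Set.Iio m).ncard = ((Finset.range m).filter fun x => p x = true).card := by
  rw [← Set.ncard_coe_finset]
  congr 1
  ext x
  simp [Set.mem_Iio, and_comm]

theorem ncard_inter_card (S : Set ℕ) [DecidablePred (· ∈ S)] (m : ℕ) :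
    (S ∩ Set.Iio m).ncard = ((Finset.range m).filter (· ∈ S)).card := by
  rw [← Set.ncard_coe_finset]
  congr 1
  ext x
  simp [Set.mem_Iio, and_comm]

theorem pdens_nonneg (S : Set ℕ) (n : ℕ) : 0 ≤ pdens S n :=
  div_nonneg (Nat.cast_nonneg _) (Nat.cast_nonneg _)

theorem ncard_inter_le (S : Set ℕ) (n : ℕ) : (S ∩ Set.Iio n).ncard ≤ n := by
  have h1 : (S ∩ Set.Iio n).ncard ≤ (Set.Iio n).ncard :=
    Set.ncard_le_ncard Set.inter_subset_right (Set.finite_Iio n)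
  have h2 : (Set.Iio n : Set ℕ).ncard = n := by
    rw [← Finset.coe_range, Set.ncard_coe_finset, Finset.card_range]
  omega

theorem pdens_le_one (S : Set ℕ) (n : ℕ) : pdens S n ≤ 1 := by
  rcases Nat.eq_zero_or_pos n with h | h
  · simp [pdens, h]
  · rw [pdens, div_le_one (by exact_mod_cast h)]
    exact_mod_cast ncard_inter_le S n

theorem sqrt_tendsto_atTop : Tendsto (fun n : ℕ => Nat.sqrt n) atTop atTop := by
  apply tendsto_atTop_atTop_of_monotone (fun _ _ h => Nat.sqrt_le_sqrt h)
  intro b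
  exact ⟨b * b, le_of_eq (Nat.sqrt_eq b).symm⟩

theorem sqrt_div_tendsto :
    Tendsto (fun n : ℕ => ((Nat.sqrt n : ℝ) + 1) / n) atTop (nhds 0) := by
  apply squeeze_zero' (Filter.Eventually.of_forall fun n =>
    div_nonneg (by positivity) (Nat.cast_nonneg n))
    ?_ ((tendsto_const_nhds (x := (2:ℝ))).div_atTop
      (tendsto_natCast_atTop_atTop.comp sqrt_tendsto_atTop))
  filter_upwards [eventually_ge_atTop 1] with n hn
  have h1 : 1 ≤ Nat.sqrt n := by
    have := Nat.sqrt_le_sqrt hn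
    simpa using this
  have hs0 : (0:ℝ) < Nat.sqrt n := by exact_mod_cast h1
  have hn0 : (0:ℝ) < n := by exact_mod_cast hn
  show (↑n.sqrt + 1) / (n:ℝ) ≤ 2 / ↑n.sqrt
  rw [div_le_div_iff₀ hn0 hs0]
  have h2 : (Nat.sqrt n : ℝ) * Nat.sqrt n ≤ n := by
    have := Nat.sqrt_le' n
    have : Nat.sqrt n * Nat.sqrt n ≤ n := by nlinarith [sq (Nat.sqrt n)]
    exact_mod_cast this
  have h3 : (Nat.sqrt n : ℝ) ≤ n := by exact_mod_cast Nat.sqrt_le_self n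
  nlinarith

theorem stmt14 (A : Set ℕ) (hA : REPred (· ∈ A)) (ε : ℝ) (hε : 0 < ε) :
    ∃ B : Set ℕ, ComputablePred (· ∈ B) ∧ B ⊆ A ∧ lowerDensity A - ε < lowerDensity B := by
  classical
  by_cases hcase : lowerDensity A - ε < 0
  · refine ⟨∅, ?_, Set.empty_subset A, ?_⟩
    · exact ComputablePred.computable_iff.2
        ⟨fun _ => false, Computable.const _, funext fun x => by simp⟩
    · have h0 : pdens ∅ = fun _ : ℕ => (0:ℝ) := funext fun n => by simp [pdens]
      have h1 : lowerDensity (∅ : Set ℕ) = 0 := by rw [lowerDensity, h0, liminf_const]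
      rw [h1]
      exact hcase
  · push_neg at hcase
    obtain ⟨q, hq1, hq2⟩ := exists_rat_btwn (show lowerDensity A - ε < lowerDensity A by linarith)
    have hq0 : (0:ℝ) < q := lt_of_le_of_lt hcase hq1
    set a : ℕ := q.num.toNat with ha
    set b : ℕ := q.den with hb
    have hb0 : 0 < b := q.pos
    have hb0' : (0:ℝ) < b := by exact_mod_cast hb0
    have hqab : (q:ℝ) = a / b := by
      rw [Rat.cast_def]
      congr 1
      · have hnum : (0:ℤ) ≤ q.num := by
          rw [Rat.num_nonneg]
          exact_mod_cast le_of_lt hq0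
        rw [ha]
        exact_mod_cast (Int.toNat_of_nonneg hnum).symm
    obtain ⟨c, hc⟩ := exists_code.1 hA
    have hmem : ∀ x, x ∈ A ↔ ∃ s, eAux c x s = true := by
      intro x
      have hdom : x ∈ A ↔ (eval c x).Dom := by
        rw [hc]
        simp [Part.assert]
      rw [hdom, Part.dom_iff_mem]
      constructor
      · rintro ⟨y, hy⟩
        obtain ⟨s, hs⟩ := evaln_complete.1 hy
        exact ⟨s, by simp [eAux, Option.isSome_iff_exists]; exact ⟨y, hs⟩⟩
      · rintro ⟨s, hs⟩
        simp only [eAux, Option.isSome_iff_exists] at hs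
        obtain ⟨y, hy⟩ := hs
        exact ⟨y, evaln_complete.2 ⟨s, hy⟩⟩
    have hbddA : atTop.IsBoundedUnder (· ≥ ·) (pdens A) :=
      Filter.isBoundedUnder_of ⟨0, fun n => pdens_nonneg A n⟩
    obtain ⟨N, hN⟩ := eventually_atTop.1 (eventually_lt_of_lt_liminf hq2 hbddA)
    have hDA : ∀ m, N ≤ m → a * m < b * ((A ∩ Set.Iio m).ncard) := by
      intro m hm
      have h1 : (q:ℝ) < ((A ∩ Set.Iio m).ncard : ℝ) / m := hN m hm
      rcases Nat.eq_zero_or_pos m with h0 | h0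
      · exfalso
        rw [h0] at h1
        simp [pdens] at h1
        have : (0:ℝ) < q := hq0
        exact absurd h1 (not_lt.2 (by exact_mod_cast this.le))
      have hm0 : (0:ℝ) < m := by exact_mod_cast h0
      have h2 : (a:ℝ) * m < b * ((A ∩ Set.Iio m).ncard : ℝ) := by
        rw [hqab, div_lt_div_iff₀ hb0' hm0] at h1
        linarith
      exact_mod_cast h2
    have hexist0 : ∀ M : ℕ, ∃ s, ∀ x < M, x ∈ A → eAux c x s = true := by
      intro M
      induction M with
      | zero => exact ⟨0, fun x hx => absurd hx (Nat.not_lt_zero x)⟩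
      | succ M ih =>
        obtain ⟨s, hs⟩ := ih
        by_cases hM : M ∈ A
        · obtain ⟨s', hs'⟩ := (hmem M).1 hM
          refine ⟨max s s', fun x hx hxA => ?_⟩
          rcases Nat.lt_succ_iff_lt_or_eq.1 hx with h | rfl
          · exact eAux_mono c (le_max_left _ _) (hs x h hxA)
          · exact eAux_mono c (le_max_right _ _) hs'
        · refine ⟨s, fun x hx hxA => ?_⟩
          rcases Nat.lt_succ_iff_lt_or_eq.1 hx with h | rfl
          · exact hs x h hxA
          · exact absurd hxA hM
    have hcnt_ge : ∀ s m, (∀ x < m, x ∈ A → eAux c x s = true) →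
        (A ∩ Set.Iio m).ncard ≤ cntAux c s m := by
      intro s m h
      rw [ncard_inter_card A m, cntAux_eq_card]
      apply Finset.card_le_card
      intro x hx
      simp only [Finset.mem_filter, Finset.mem_range] at hx ⊢
      exact ⟨hx.1, h x hx.1 hx.2⟩
    have hexist : ∀ k, ∃ s, PAux c N a b k s = true := by
      intro k
      obtain ⟨s, hs⟩ := hexist0 (k * k)
      refine ⟨s, (PAux_iff _ _ _ _ _ _).2 fun m hm => ?_⟩
      rcases lt_or_ge m N with h | h
      · exact Or.inl h
      · refine Or.inr ?_
        have h1 := hDA m h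
        have h2 := hcnt_ge s m (fun x hx hxA => hs x (lt_of_lt_of_le hx hm) hxA)
        exact lt_of_lt_of_le h1 (Nat.mul_le_mul_left b h2)
    set g : ℕ → ℕ := gAux c N a b hexist with hgdef
    set f : ℕ → Bool := fun x => eAux c x (g x) with hfdef
    have hgmono : ∀ {k k' : ℕ}, k ≤ k' → g k ≤ g k' := by
      intro k k' hk
      apply Nat.find_mono
      intro s hs
      rw [PAux_iff] at hs ⊢
      exact fun m hm => hs m (le_trans hm (Nat.mul_le_mul hk hk))
    refine ⟨{x | f x = true}, ?_, ?_, ?_⟩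
    · exact ComputablePred.computable_iff.2
        ⟨f, (eAux_prim c).to_comp.comp Computable.id (gAux_computable c N a b hexist), rfl⟩
    · intro x hx
      exact (hmem x).2 ⟨g x, hx⟩
    · have hkey : ∀ n, 2 ≤ n → N ≤ n →
          (q:ℝ) - ((Nat.sqrt n : ℝ) + 1) / n ≤ pdens {x | f x = true} n := by
        intro n h2 hNn
        set k := Nat.sqrt n + 1 with hk
        have hkn : k ≤ n := by
          have := Nat.sqrt_lt_self (show 1 < n by omega)
          omega
        have hnk : n ≤ k * k := by
          have h := Nat.lt_succ_sqrt n
          simp only [Nat.succ_eq_add_one] at h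
          simp only [hk]
          exact le_of_lt h
        have hPk : PAux c N a b k (g k) = true := Nat.find_spec (hexist k)
        have hdens : a * n < b * cntAux c (g k) n := by
          rcases ((PAux_iff _ _ _ _ _ _).1 hPk) n hnk with h | h
          · omega
          · exact h
        set card := ((Finset.range n).filter fun x => f x = true).card with hcard_def
        have hsub : (Finset.range n).filter (fun x => eAux c x (g k) = true) ⊆
            ((Finset.range n).filter fun x => f x = true) ∪ Finset.range k := by
          intro x hx
          simp only [Finset.mem_filter, Finset.mem_range, Finset.mem_union] at hx ⊢
          rcases lt_or_ge x k with h | h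
          · exact Or.inr h
          · exact Or.inl ⟨hx.1, eAux_mono c (hgmono h) hx.2⟩
        have hcard : cntAux c (g k) n ≤ card + k := by
          rw [cntAux_eq_card]
          calc _ ≤ (((Finset.range n).filter fun x => f x = true) ∪ Finset.range k).card :=
                Finset.card_le_card hsub
            _ ≤ card + (Finset.range k).card := Finset.card_union_le _ _
            _ = card + k := by rw [Finset.card_range]
        have hBn : pdens {x | f x = true} n = (card : ℝ) / n := by
          rw [pdens, ncard_setOf_bool]
        have hn0 : (0:ℝ) < n := by
          have : 0 < n := by omega
          exact_mod_cast this
        have h5 : (a:ℝ) * n < b * ((card : ℝ) + k) := by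
          exact_mod_cast lt_of_lt_of_le hdens (Nat.mul_le_mul_left b hcard)
        have h6 : (a:ℝ)/b ≤ ((card:ℝ) + k)/n := by
          rw [div_le_div_iff₀ hb0' hn0]
          nlinarith
        have hkcast : ((Nat.sqrt n : ℝ) + 1) = (k : ℝ) := by
          rw [hk]; push_cast; ring
        rw [hBn, hqab, hkcast]
        have h7 : (a:ℝ)/b - (k:ℝ)/n ≤ ((card:ℝ) + k)/n - (k:ℝ)/n := by linarith
        calc (a:ℝ)/b - (k:ℝ)/n ≤ ((card:ℝ) + k)/n - (k:ℝ)/n := h7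
          _ = (card:ℝ)/n := by ring
      have hev2 : ∀ᶠ n in atTop,
          (q:ℝ) - ((Nat.sqrt n : ℝ) + 1) / n ≤ pdens {x | f x = true} n := by
        filter_upwards [eventually_ge_atTop 2, eventually_ge_atTop N] with n h1 h2
        exact hkey n h1 h2
      have hlim : Tendsto (fun n : ℕ => (q:ℝ) - ((Nat.sqrt n : ℝ) + 1)/n) atTop (nhds q) := by
        have := (tendsto_const_nhds (x := (q:ℝ))).sub sqrt_div_tendsto
        simpa using this
      have h8 : (q:ℝ) ≤ lowerDensity {x | f x = true} := by
        have h9 := liminf_le_liminf hev2 (hlim.isBoundedUnder_ge)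
          (IsBoundedUnder.isCoboundedUnder_ge
            (Filter.isBoundedUnder_of ⟨1, fun n => pdens_le_one _ n⟩))
        rw [hlim.liminf_eq] at h9
        exact h9
      linarith
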